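/- (Stationary distribution, semi-infinite case.) Assume 0 < p_0 < 1, p_0 + p_1 < 1, and Q := ∑_{k=1}^{K−1} q_k < 1. Define a_0 = 1 and, for n ≥ 1, a_n = ∑_{k=1}^{min(n, K−1)} q_k a_{n−k}. Then the sequence (a_n)_{n≥0} is summable with ∑_{n=0}^∞ a_n = 1/(1−Q), and the sequence π_n := (1−Q) a_n (equivalently π_n = a_n π_0 with π_0 = (∑_m a_m)^{−1}) is a stationary probability distribution of P: π_n ≥ 0 for all n, ∑_{n=0}^∞ π_n = 1, and ∑_{i=0}^∞ π_i P(i,n) = π_n for every n ∈ ℕ. -/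

import Mathlib

open scoped BigOperators
open MeasureTheory ProbabilityTheory Filter

/-- Transition matrix of the infinite-capacity Moran storage chain on `ℕ`:
`P 0 0 = p 0 + p 1`, `P 0 j = p (j+1)` for `j ≥ 1`, and for `i ≥ 1`,
`P i j = p (j-i+1)` if `j ≥ i-1` and `P i j = 0` otherwise. -/
noncomputable def moranPInf (p : ℕ → ℝ) : ℕ → ℕ → ℝ := fun i j =>
  if i = 0 ∧ j = 0 then p 0 + p 1
  else if i ≤ j + 1 then p (j + 1 - i)
  else 0

/-- `qcoef p K k = (1/p₀) ∑_{j=k+1}^K p_j`. -/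
noncomputable def qcoef (p : ℕ → ℝ) (K k : ℕ) : ℝ :=
  (∑ j ∈ Finset.Icc (k + 1) K, p j) / p 0

/-- Tail sums `T k = ∑_{j=k+1}^K p j`. -/
noncomputable def Tpart (p : ℕ → ℝ) (K k : ℕ) : ℝ := ∑ j ∈ Finset.Icc (k + 1) K, p j

/-- stationary distribution of the semi-infinite dam: the recursively defined
sequence `a` is summable with sum `1/(1-Q)`, and `π n = (1-Q) a n` is a stationary
probability distribution of the infinite-capacity Moran transition matrix. -/
theorem stmt10 (K : ℕ) (hK : 2 ≤ K) (p : ℕ → ℝ) (hpnn : ∀ j, 0 ≤ p j)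
    (hpsupp : ∀ j, K < j → p j = 0) (hpsum : ∑ j ∈ Finset.range (K + 1), p j = 1)
    (hp0 : 0 < p 0) (hp0' : p 0 < 1) (hp01 : p 0 + p 1 < 1)
    (Q : ℝ) (hQ : Q = ∑ k ∈ Finset.Icc 1 (K - 1), qcoef p K k) (hQlt : Q < 1)
    (a : ℕ → ℝ) (ha0 : a 0 = 1)
    (haRec : ∀ n, 1 ≤ n →
      a n = ∑ k ∈ Finset.Icc 1 (min n (K - 1)), qcoef p K k * a (n - k)) :
    Summable a ∧ (∑' n, a n = 1 / (1 - Q)) ∧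
    (∀ n, 0 ≤ (1 - Q) * a n) ∧ (∑' n, (1 - Q) * a n = 1) ∧
    (∀ n, ∑' i, ((1 - Q) * a i) * moranPInf p i n = (1 - Q) * a n) := by
  have hp0ne : p 0 ≠ 0 := ne_of_gt hp0
  set T : ℕ → ℝ := Tpart p K with hTdef
  have hq : ∀ k, qcoef p K k = T k / p 0 := fun k => rfl
  have hTnn : ∀ k, 0 ≤ T k := fun k => Finset.sum_nonneg fun j _ => hpnn j
  have hTzero : ∀ k, K ≤ k → T k = 0 := by
    intro k hk
    have : Finset.Icc (k + 1) K = ∅ := Finset.Icc_eq_empty (by omega)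
    simp [hTdef, Tpart, this]
  have hTstep : ∀ k, T k = p (k + 1) + T (k + 1) := by
    intro k
    rcases le_or_gt (k + 1) K with h | h
    · have h1 : T k = ∑ j ∈ Finset.Ico (k + 1) (K + 1), p j := by
        rw [hTdef]; unfold Tpart; rw [Finset.Ico_add_one_right_eq_Icc]
      have h2 : T (k + 1) = ∑ j ∈ Finset.Ico (k + 2) (K + 1), p j := by
        rw [hTdef]; unfold Tpart; rw [Finset.Ico_add_one_right_eq_Icc]
      rw [h1, h2, Finset.sum_eq_sum_Ico_succ_bot (by omega : k + 1 < K + 1)]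
    · rw [hTzero k (by omega), hTzero (k + 1) (by omega), hpsupp (k + 1) (by omega)]
      ring
  have hT0 : T 0 = 1 - p 0 := by
    have h1 : T 0 = ∑ j ∈ Finset.Ico 1 (K + 1), p j := by
      rw [hTdef]; unfold Tpart; rw [Finset.Ico_add_one_right_eq_Icc]
    have h2 : ∑ j ∈ Finset.range (K + 1), p j
        = p 0 + ∑ j ∈ Finset.Ico 1 (K + 1), p j := by
      rw [Finset.range_eq_Ico, Finset.sum_eq_sum_Ico_succ_bot (by omega : 0 < K + 1)]
    rw [h1]; rw [h2] at hpsum; linarith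
  have hqnn : ∀ k, 0 ≤ qcoef p K k := fun k => div_nonneg (hTnn k) hp0.le
  have hQnn : 0 ≤ Q := by
    rw [hQ]; exact Finset.sum_nonneg fun k _ => hqnn k
  have h1Q : 0 < 1 - Q := by linarith
  -- nonnegativity of a
  have ann : ∀ n, 0 ≤ a n := by
    intro n
    induction n using Nat.strong_induction_on with
    | _ n ih =>
      match n with
      | 0 => rw [ha0]; norm_num
      | Nat.succ m =>
        rw [haRec (m + 1) (by omega)]
        apply Finset.sum_nonneg
        intro k hk
        have hk1 : 1 ≤ k := (Finset.mem_Icc.mp hk).1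
        exact mul_nonneg (hqnn k) (ih _ (by omega))
  -- key recursion in T form
  have key : ∀ n, p 0 * a (n + 1) = ∑ m ∈ Finset.range (n + 1), T (n + 1 - m) * a m := by
    intro n
    rw [haRec (n + 1) (by omega), Finset.mul_sum]
    have h1 : ∀ k ∈ Finset.Icc 1 (min (n + 1) (K - 1)),
        p 0 * (qcoef p K k * a (n + 1 - k)) = T k * a (n + 1 - k) := by
      intro k _
      rw [hq k]; field_simp
    rw [Finset.sum_congr rfl h1]
    have hsub : Finset.Icc 1 (min (n + 1) (K - 1)) ⊆ Finset.Icc 1 (n + 1) := by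
      intro k hk; simp only [Finset.mem_Icc] at *; omega
    rw [Finset.sum_subset hsub (by
      intro k hk hk'
      simp only [Finset.mem_Icc] at hk hk'
      rw [hTzero k (by omega), zero_mul])]
    rw [show Finset.Icc 1 (n + 1) = Finset.Ico 1 (n + 2) from (Finset.Ico_add_one_right_eq_Icc 1 (n + 1)).symm]
    rw [Finset.sum_Ico_eq_sum_range]
    rw [show n + 2 - 1 = n + 1 from rfl]
    rw [← Finset.sum_range_reflect (fun i => T (1 + i) * a (n + 1 - (1 + i))) (n + 1)]
    apply Finset.sum_congr rfl
    intro j hj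
    have hjn : j < n + 1 := Finset.mem_range.mp hj
    rw [show 1 + (n + 1 - 1 - j) = n + 1 - j from by omega,
      show n + 1 - (n + 1 - j) = j from by omega]
  -- expansion with indicator
  set g : ℕ → ℕ → ℝ := fun k n => if k ≤ n + 1 then qcoef p K k * a (n + 1 - k) else 0 with hgdef
  have hgnn : ∀ k n, 0 ≤ g k n := by
    intro k n
    by_cases h : k ≤ n + 1
    · simp only [hgdef, if_pos h]; exact mul_nonneg (hqnn k) (ann _)
    · simp only [hgdef, if_neg h]; exact le_rfl
  have expand : ∀ n, a (n + 1) = ∑ k ∈ Finset.Icc 1 (K - 1), g k n := by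
    intro n
    have hsub : Finset.Icc 1 (min (n + 1) (K - 1)) ⊆ Finset.Icc 1 (K - 1) := by
      intro k hk; simp only [Finset.mem_Icc] at *; omega
    have hz : ∀ k ∈ Finset.Icc 1 (K - 1), k ∉ Finset.Icc 1 (min (n + 1) (K - 1)) →
        g k n = 0 := by
      intro k hk hk'
      simp only [Finset.mem_Icc] at hk hk'
      simp only [hgdef]
      rw [if_neg (by omega)]
    rw [haRec (n + 1) (by omega), ← Finset.sum_subset hsub hz]
    apply Finset.sum_congr rfl
    intro k hk
    have hk' := Finset.mem_Icc.mp hk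
    simp only [hgdef]
    rw [if_pos (by omega)]
  have hgshift : ∀ k, 1 ≤ k → ∀ m, g k (m + (k - 1)) = qcoef p K k * a m := by
    intro k hk m
    simp only [hgdef]
    rw [if_pos (by omega), show m + (k - 1) + 1 - k = m from by omega]
  have hgsum : ∀ k, 1 ≤ k → ∀ N, ∑ n ∈ Finset.range ((k - 1) + N), g k n
      = qcoef p K k * ∑ m ∈ Finset.range N, a m := by
    intro k hk N
    rw [Finset.sum_range_add]
    have h1 : ∑ n ∈ Finset.range (k - 1), g k n = 0 := by
      apply Finset.sum_eq_zero
      intro n hn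
      have := Finset.mem_range.mp hn
      simp only [hgdef]
      rw [if_neg (by omega)]
    rw [h1, zero_add, Finset.mul_sum]
    apply Finset.sum_congr rfl
    intro i _
    rw [show (k - 1) + i = i + (k - 1) from by omega, hgshift k hk i]
  have hgle : ∀ k, 1 ≤ k → ∀ N, ∑ n ∈ Finset.range N, g k n
      ≤ qcoef p K k * ∑ m ∈ Finset.range N, a m := by
    intro k hk N
    calc ∑ n ∈ Finset.range N, g k n
        ≤ ∑ n ∈ Finset.range ((k - 1) + N), g k n := by
          apply Finset.sum_le_sum_of_subset_of_nonneg
          · exact Finset.range_subset_range.mpr (by omega)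
          · intro n _ _; exact hgnn k n
      _ = qcoef p K k * ∑ m ∈ Finset.range N, a m := hgsum k hk N
  -- partial sum bound
  have step : ∀ N, ∑ n ∈ Finset.range (N + 1), a n ≤ 1 + Q * ∑ n ∈ Finset.range N, a n := by
    intro N
    rw [Finset.sum_range_succ' a N, ha0]
    have h1 : ∑ n ∈ Finset.range N, a (n + 1)
        = ∑ k ∈ Finset.Icc 1 (K - 1), ∑ n ∈ Finset.range N, g k n := by
      rw [← Finset.sum_comm]
      exact Finset.sum_congr rfl fun n _ => expand n
    have h2 : ∑ k ∈ Finset.Icc 1 (K - 1), ∑ n ∈ Finset.range N, g k n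
        ≤ Q * ∑ n ∈ Finset.range N, a n := by
      rw [hQ, Finset.sum_mul]
      apply Finset.sum_le_sum
      intro k hk
      exact hgle k (Finset.mem_Icc.mp hk).1 N
    rw [h1]; linarith
  have bound : ∀ N, ∑ n ∈ Finset.range N, a n ≤ 1 / (1 - Q) := by
    intro N
    induction N with
    | zero =>
      simp only [Finset.range_zero, Finset.sum_empty]
      exact div_nonneg zero_le_one h1Q.le
    | succ N ih =>
      have h2 : Q * ∑ n ∈ Finset.range N, a n ≤ Q * (1 / (1 - Q)) :=
        mul_le_mul_of_nonneg_left ih hQnn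
      have h3 : 1 + Q * (1 / (1 - Q)) = 1 / (1 - Q) := by
        field_simp
        ring
      calc ∑ n ∈ Finset.range (N + 1), a n
          ≤ 1 + Q * ∑ n ∈ Finset.range N, a n := step N
        _ ≤ 1 + Q * (1 / (1 - Q)) := by linarith
        _ = 1 / (1 - Q) := h3
  have hsum : Summable a := summable_of_sum_range_le ann bound
  -- summability of g k
  have hgsummable : ∀ k, 1 ≤ k → Summable (g k) := by
    intro k hk
    have h1 : (fun m => g k (m + (k - 1))) = fun m => qcoef p K k * a m :=
      funext (hgshift k hk)
    exact (summable_nat_add_iff (k - 1)).mp (h1 ▸ hsum.mul_left (qcoef p K k))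
  have hgtsum : ∀ k, 1 ≤ k → ∑' n, g k n = qcoef p K k * ∑' n, a n := by
    intro k hk
    have h0 := Summable.sum_add_tsum_nat_add (f := g k) (k - 1) (hgsummable k hk)
    have h1 : ∑ n ∈ Finset.range (k - 1), g k n = 0 := by
      apply Finset.sum_eq_zero
      intro n hn
      have := Finset.mem_range.mp hn
      simp only [hgdef]
      rw [if_neg (by omega)]
    have h2 : ∑' m, g k (m + (k - 1)) = qcoef p K k * ∑' n, a n := by
      rw [funext (hgshift k hk), tsum_mul_left]
    rw [h1, zero_add, h2] at h0
    exact h0.symm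
  -- value of the sum
  have hAeq : ∑' n, a n = 1 + Q * ∑' n, a n := by
    conv_lhs => rw [Summable.tsum_eq_zero_add hsum, ha0]
    congr 1
    calc ∑' n, a (n + 1) = ∑' n, ∑ k ∈ Finset.Icc 1 (K - 1), g k n := tsum_congr expand
      _ = ∑ k ∈ Finset.Icc 1 (K - 1), ∑' n, g k n :=
          Summable.tsum_finsetSum fun k hk => hgsummable k (Finset.mem_Icc.mp hk).1
      _ = ∑ k ∈ Finset.Icc 1 (K - 1), qcoef p K k * ∑' n, a n :=
          Finset.sum_congr rfl fun k hk => hgtsum k (Finset.mem_Icc.mp hk).1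
      _ = Q * ∑' n, a n := by rw [← Finset.sum_mul, ← hQ]
  have hAval : ∑' n, a n = 1 / (1 - Q) := by
    rw [eq_div_iff (ne_of_gt h1Q)]
    nlinarith [hAeq]
  -- stationarity finite identity
  have hmain : ∀ n, ∑ i ∈ Finset.range (n + 2), a i * moranPInf p i n = a n := by
    intro n
    match n with
    | 0 =>
      have hP0 : moranPInf p 0 0 = p 0 + p 1 := by simp [moranPInf]
      have hP1 : moranPInf p 1 0 = p 0 := by simp [moranPInf]
      have hkey0 : p 0 * a 1 = T 1 := by simpa [ha0] using key 0
      have hkey0' : a 1 * p 0 = T 1 := by rw [mul_comm]; exact hkey0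
      have hT01 : T 0 = p 1 + T 1 := by simpa using hTstep 0
      rw [Finset.sum_range_succ, Finset.sum_range_one, hP0, hP1, ha0]
      linarith [hkey0', hT01, hT0]
    | Nat.succ m =>
      set n := m + 1 with hn
      have hP : ∀ i ∈ Finset.range (n + 2), a i * moranPInf p i n = a i * p (n + 1 - i) := by
        intro i hi
        have hi' : i < n + 2 := Finset.mem_range.mp hi
        unfold moranPInf
        rw [if_neg (by omega), if_pos (by omega)]
      rw [Finset.sum_congr rfl hP, Finset.sum_range_succ, Nat.sub_self]
      have hmid : ∑ i ∈ Finset.range (n + 1), a i * p (n + 1 - i)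
          = (∑ i ∈ Finset.range (n + 1), a i * T (n - i))
            - ∑ i ∈ Finset.range (n + 1), a i * T (n + 1 - i) := by
        rw [← Finset.sum_sub_distrib]
        apply Finset.sum_congr rfl
        intro i hi
        have hi' : i < n + 1 := Finset.mem_range.mp hi
        have h := hTstep (n - i)
        rw [show n - i + 1 = n + 1 - i from by omega] at h
        rw [show a i * T (n - i) - a i * T (n + 1 - i) = a i * (T (n - i) - T (n + 1 - i)) from by
          ring]
        rw [show T (n - i) - T (n + 1 - i) = p (n + 1 - i) from by linarith]
      have h1 : ∑ i ∈ Finset.range (n + 1), a i * T (n + 1 - i) = p 0 * a (n + 1) := by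
        rw [key n]
        exact Finset.sum_congr rfl fun i _ => mul_comm _ _
      have h2 : ∑ i ∈ Finset.range (n + 1), a i * T (n - i) = p 0 * a n + a n * T 0 := by
        rw [Finset.sum_range_succ, Nat.sub_self]
        congr 1
        have hkeym := key m
        rw [← hn] at hkeym
        rw [hkeym]
        exact Finset.sum_congr rfl fun i _ => mul_comm _ _
      rw [hmid, h1, h2, hT0]
      ring
  refine ⟨hsum, hAval, fun n => mul_nonneg h1Q.le (ann n), ?_, ?_⟩
  · rw [tsum_mul_left, hAval]
    field_simp
  · intro n
    have hzero : ∀ i ∉ Finset.range (n + 2), ((1 - Q) * a i) * moranPInf p i n = 0 := by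
      intro i hi
      have hi' : ¬ i < n + 2 := fun h => hi (Finset.mem_range.mpr h)
      have : moranPInf p i n = 0 := by
        unfold moranPInf
        rw [if_neg (by omega), if_neg (by omega)]
      rw [this, mul_zero]
    rw [tsum_eq_sum hzero]
    calc ∑ i ∈ Finset.range (n + 2), ((1 - Q) * a i) * moranPInf p i n
        = (1 - Q) * ∑ i ∈ Finset.range (n + 2), a i * moranPInf p i n := by
          rw [Finset.mul_sum]
          exact Finset.sum_congr rfl fun i _ => by ring
      _ = (1 - Q) * a n := by rw [hmain n]
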